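/- In the presented group P₆ = ⟨x, y | x⁶, y³, (xy)²⟩, the elements t₁ = y x⁻² and t₂ = y⁻¹ x² commute, the subgroup they generate is a normal subgroup of P₆, and this subgroup is isomorphic to ℤ × ℤ (free abelian of rank 2). -/

import Mathlib

/-- Relators of `P₆ = ⟨x, y | x⁶, y³, (xy)²⟩`, the fundamental group of `S²(2,3,6)`. -/
def relsP6 : Set (FreeGroup (Fin 2)) :=
  {(FreeGroup.of 0) ^ 6, (FreeGroup.of 1) ^ 3, (FreeGroup.of 0 * FreeGroup.of 1) ^ 2}

/-- `P₆ = ⟨x, y | x⁶, y³, (xy)²⟩`. -/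
abbrev P6 : Type := PresentedGroup relsP6

/-- The generator `x` of `P₆`. -/
def P6x : P6 := PresentedGroup.of 0

/-- The generator `y` of `P₆`. -/
def P6y : P6 := PresentedGroup.of 1

/-- The translation `t₁ = y x⁻²` of `P₆`. -/
def P6t1 : P6 := P6y * (P6x * P6x)⁻¹

/-- The translation `t₂ = y⁻¹ x²` of `P₆`. -/
def P6t2 : P6 := P6y⁻¹ * (P6x * P6x)

/-! ### Generic consequences of the triangle-group relations -/

section Generic
variable {G : Type*} [Group G] {a b : G}

private lemma rel_a (ha : a ^ 6 = 1) : a * a * a * a * a * a = 1 := by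
  rw [← ha]; rw [pow_succ, pow_succ, pow_succ, pow_succ, pow_succ, pow_one]

private lemma rel_b (hb : b ^ 3 = 1) : b * b * b = 1 := by
  rw [← hb, pow_succ, pow_succ, pow_one]

private lemma rel_ab (hab : (a * b) ^ 2 = 1) : a * b * (a * b) = 1 := by
  rw [← hab, pow_succ, pow_one]

private lemma binv (hb : b ^ 3 = 1) : b⁻¹ = b * b :=
  inv_eq_of_mul_eq_one_right (by rw [show b * (b * b) = b * b * b by group, rel_b hb])

private lemma ainv3 (ha : a ^ 6 = 1) : a⁻¹ * a⁻¹ * a⁻¹ = a * a * a := by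
  have h : (a * a * a) * (a * a * a) = 1 := by
    rw [show (a*a*a)*(a*a*a) = a*a*a*a*a*a by group, rel_a ha]
  rw [show a⁻¹ * a⁻¹ * a⁻¹ = (a * a * a)⁻¹ by group]
  exact inv_eq_of_mul_eq_one_right h

private lemma hab' (hab : (a * b) ^ 2 = 1) : a * b = b⁻¹ * a⁻¹ := by
  have h := mul_eq_one_iff_eq_inv.mp (rel_ab hab)
  rwa [mul_inv_rev] at h

private lemma hba' (hab : (a * b) ^ 2 = 1) : b * a = a⁻¹ * b⁻¹ := by
  calc b * a = b * (a * b) * b⁻¹ := by group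
    _ = b * (b⁻¹ * a⁻¹) * b⁻¹ := by rw [hab' hab]
    _ = a⁻¹ * b⁻¹ := by group

private lemma hbab (hab : (a * b) ^ 2 = 1) : b⁻¹ = a * b * a := by
  refine Eq.symm ?_
  calc a * b * a = (b⁻¹ * a⁻¹) * a := by rw [hab' hab]
    _ = b⁻¹ := by group

private lemma haba (hab : (a * b) ^ 2 = 1) : a⁻¹ = b * a * b := by
  refine Eq.symm ?_
  calc b * a * b = (a⁻¹ * b⁻¹) * b := by rw [hba' hab]
    _ = a⁻¹ := by group

/-- `t₁ = b (aa)⁻¹` and `t₂ = b⁻¹ (aa)` commute. -/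
private lemma tri_comm (ha : a ^ 6 = 1) (hb : b ^ 3 = 1) (hab : (a * b) ^ 2 = 1) :
    (b * (a * a)⁻¹) * (b⁻¹ * (a * a)) = (b⁻¹ * (a * a)) * (b * (a * a)⁻¹) := by
  have key : b * a⁻¹ * b = b⁻¹ * a * b⁻¹ := by
    calc b * a⁻¹ * b = b * (b * a * b) * b := by rw [← haba hab]
      _ = (b * b) * a * (b * b) := by group
      _ = b⁻¹ * a * b⁻¹ := by rw [← binv hb]
  calc (b * (a * a)⁻¹) * (b⁻¹ * (a * a))
      = b * a⁻¹ * (a⁻¹ * b⁻¹) * (a * a) := by group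
    _ = b * a⁻¹ * (b * a) * (a * a) := by rw [← hba' hab]
    _ = (b * a⁻¹ * b) * (a * a * a) := by group
    _ = (b⁻¹ * a * b⁻¹) * (a * a * a) := by rw [key]
    _ = (b⁻¹ * a * b⁻¹) * (a⁻¹ * a⁻¹ * a⁻¹) := by rw [ainv3 ha]
    _ = b⁻¹ * a * (b⁻¹ * a⁻¹) * (a⁻¹ * a⁻¹) := by group
    _ = b⁻¹ * a * (a * b) * (a⁻¹ * a⁻¹) := by rw [← hab' hab]
    _ = (b⁻¹ * (a * a)) * (b * (a * a)⁻¹) := by group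

/-- `a t₁ a⁻¹ = t₂`. -/
private lemma tri_L2 (ha : a ^ 6 = 1) (hab : (a * b) ^ 2 = 1) :
    a * (b * (a * a)⁻¹) * a⁻¹ = b⁻¹ * (a * a) := by
  calc a * (b * (a * a)⁻¹) * a⁻¹ = (a * b) * (a⁻¹ * a⁻¹ * a⁻¹) := by group
    _ = (b⁻¹ * a⁻¹) * (a * a * a) := by rw [hab' hab, ainv3 ha]
    _ = b⁻¹ * (a * a) := by group

/-- `a t₂ a⁻¹ = t₂ t₁⁻¹`. -/
private lemma tri_L3 (ha : a ^ 6 = 1) (hb : b ^ 3 = 1) (hab : (a * b) ^ 2 = 1) :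
    a * (b⁻¹ * (a * a)) * a⁻¹ = (b⁻¹ * (a * a)) * (b * (a * a)⁻¹)⁻¹ := by
  have ainv2 : (a * a)⁻¹ = a * a * (a * a) :=
    inv_eq_of_mul_eq_one_right
      (by rw [show (a*a) * (a*a*(a*a)) = a*a*a*a*a*a by group, rel_a ha])
  calc a * (b⁻¹ * (a * a)) * a⁻¹ = a * (b * b) * a := by rw [← binv hb]; group
    _ = (a * b) * (b * a) := by group
    _ = (b⁻¹ * a⁻¹) * (a⁻¹ * b⁻¹) := by rw [hab' hab, hba' hab]
    _ = b⁻¹ * (a * a)⁻¹ * b⁻¹ := by group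
    _ = b⁻¹ * (a * a * (a * a)) * b⁻¹ := by rw [ainv2]
    _ = (b⁻¹ * (a * a)) * ((a * a) * b⁻¹) := by group
    _ = (b⁻¹ * (a * a)) * (b * (a * a)⁻¹)⁻¹ := by
          rw [show (b * (a * a)⁻¹)⁻¹ = (a * a) * b⁻¹ by rw [mul_inv_rev, inv_inv]]

end Generic

/-! ### The relations hold in `P₆` -/

lemma P6_rel_one : ∀ r ∈ relsP6, PresentedGroup.mk relsP6 r = 1 := fun _ hr =>
  (QuotientGroup.eq_one_iff _).mpr (Subgroup.subset_normalClosure hr)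

lemma P6x_pow6 : P6x ^ 6 = 1 := by
  have h := P6_rel_one _ (Set.mem_insert _ _)
  rw [map_pow] at h
  exact h

lemma P6y_pow3 : P6y ^ 3 = 1 := by
  have h := P6_rel_one _ (Set.mem_insert_of_mem _ (Set.mem_insert _ _))
  rw [map_pow] at h
  exact h

lemma P6xy_pow2 : (P6x * P6y) ^ 2 = 1 := by
  have h := P6_rel_one _
    (Set.mem_insert_of_mem _ (Set.mem_insert_of_mem _ (Set.mem_singleton _)))
  rw [map_pow, map_mul] at h
  exact h

lemma P6_comm : Commute P6t1 P6t2 := by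
  show P6t1 * P6t2 = P6t2 * P6t1
  show (P6y * (P6x * P6x)⁻¹) * (P6y⁻¹ * (P6x * P6x))
      = (P6y⁻¹ * (P6x * P6x)) * (P6y * (P6x * P6x)⁻¹)
  exact tri_comm P6x_pow6 P6y_pow3 P6xy_pow2

lemma P6_conj1 : P6x * P6t1 * P6x⁻¹ = P6t2 := by
  show P6x * (P6y * (P6x * P6x)⁻¹) * P6x⁻¹ = P6y⁻¹ * (P6x * P6x)
  exact tri_L2 P6x_pow6 P6xy_pow2

lemma P6_conj2 : P6x * P6t2 * P6x⁻¹ = P6t2 * P6t1⁻¹ := by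
  show P6x * (P6y⁻¹ * (P6x * P6x)) * P6x⁻¹
      = (P6y⁻¹ * (P6x * P6x)) * (P6y * (P6x * P6x)⁻¹)⁻¹
  exact tri_L3 P6x_pow6 P6y_pow3 P6xy_pow2

lemma P6_conj1' : P6x⁻¹ * P6t2 * P6x = P6t1 := by
  rw [← P6_conj1]; group

lemma P6_conj2' : P6x⁻¹ * P6t1 * P6x = P6t2⁻¹ * P6t1 := by
  have h4 : P6x * P6t2⁻¹ * P6x⁻¹ * P6t2 = P6t1 := by
    rw [show P6x * P6t2⁻¹ * P6x⁻¹ = (P6x * P6t2 * P6x⁻¹)⁻¹ by group, P6_conj2]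
    group
  calc P6x⁻¹ * P6t1 * P6x
      = P6x⁻¹ * (P6x * P6t2⁻¹ * P6x⁻¹ * P6t2) * P6x := by rw [h4]
    _ = P6t2⁻¹ * (P6x⁻¹ * P6t2 * P6x) := by group
    _ = P6t2⁻¹ * P6t1 := by rw [P6_conj1']

lemma P6y_eq : P6y = P6t1 * (P6x * P6x) := by
  show P6y = (P6y * (P6x * P6x)⁻¹) * (P6x * P6x)
  group

/-! ### The concrete affine model:  3×3 integer matrices -/

/-- 3×3 integer matrices. -/
abbrev M3 : Type := Matrix (Fin 3) (Fin 3) ℤ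

/-- The image of `x` : rotation by 60°. -/
def Xu : M3ˣ := ⟨!![1,-1,0;1,0,0;0,0,1], !![0,1,0;-1,1,0;0,0,1], by decide, by decide⟩

/-- The image of `y` : rotation by 120° followed by a translation. -/
def Yu : M3ˣ := ⟨!![0,-1,1;1,-1,0;0,0,1], !![-1,1,1;-1,0,1;0,0,1], by decide, by decide⟩

/-- Translation by a vector, as an affine matrix. -/
def tv (v : ℤ × ℤ) : M3ˣ :=
  ⟨!![1,0,v.1;0,1,v.2;0,0,1], !![1,0,-v.1;0,1,-v.2;0,0,1],
   by ext i j; fin_cases i <;> fin_cases j <;>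
      simp [Matrix.mul_apply, Fin.sum_univ_succ, Matrix.one_apply],
   by ext i j; fin_cases i <;> fin_cases j <;>
      simp [Matrix.mul_apply, Fin.sum_univ_succ, Matrix.one_apply]⟩

/-- The homomorphism of translations. -/
def chi : Multiplicative (ℤ × ℤ) →* M3ˣ where
  toFun p := tv (Multiplicative.toAdd p)
  map_one' := by apply Units.ext; show (tv (0,0)).val = 1; decide
  map_mul' p q := by
    apply Units.ext
    show (tv (Multiplicative.toAdd p + Multiplicative.toAdd q)).val
        = (tv (Multiplicative.toAdd p)).val * (tv (Multiplicative.toAdd q)).val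
    ext i j
    fin_cases i <;> fin_cases j <;>
      simp [tv, Matrix.mul_apply, Fin.sum_univ_succ, Matrix.vecHead, Matrix.vecTail] <;> ring

lemma tv_injective {u v : ℤ} (h : tv (u, v) = 1) : u = 0 ∧ v = 0 := by
  have hv := congrArg Units.val h
  have h1 := congrFun (congrFun hv 0) 2
  have h2 := congrFun (congrFun hv 1) 2
  simp [tv, Matrix.one_apply] at h1 h2
  exact ⟨h1, h2⟩

lemma tv_zpow (n : ℤ) (w : ℤ × ℤ) : (tv w) ^ n = tv (n • w) := by
  have h1 : tv w = chi (Multiplicative.ofAdd w) := rfl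
  have h2 : tv (n • w) = chi (Multiplicative.ofAdd (n • w)) := rfl
  rw [h1, h2, ← map_zpow, ofAdd_zsmul]

lemma tv_mul (u w : ℤ × ℤ) : tv u * tv w = tv (u + w) := by
  have h1 : tv u = chi (Multiplicative.ofAdd u) := rfl
  have h2 : tv w = chi (Multiplicative.ofAdd w) := rfl
  have h3 : tv (u + w) = chi (Multiplicative.ofAdd (u + w)) := rfl
  rw [h1, h2, h3, ← map_mul, ofAdd_add]

/-- The map sending the generators to the affine matrices. -/
def fP6 : Fin 2 → M3ˣ := ![Xu, Yu]

lemma fP6_rels : ∀ r ∈ relsP6, FreeGroup.lift fP6 r = 1 := by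
  intro r hr
  simp only [relsP6, Set.mem_insert_iff, Set.mem_singleton_iff] at hr
  rcases hr with rfl | rfl | rfl
  · rw [map_pow, FreeGroup.lift_apply_of]
    show Xu ^ 6 = 1
    apply Units.ext
    rw [Units.val_pow_eq_pow_val]
    decide
  · rw [map_pow, FreeGroup.lift_apply_of]
    show Yu ^ 3 = 1
    apply Units.ext
    rw [Units.val_pow_eq_pow_val]
    decide
  · rw [map_pow, map_mul, FreeGroup.lift_apply_of, FreeGroup.lift_apply_of]
    show (Xu * Yu) ^ 2 = 1
    apply Units.ext
    rw [Units.val_pow_eq_pow_val]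
    decide

/-- The homomorphism from `P₆` to the affine group. -/
def phiP6 : P6 →* M3ˣ := PresentedGroup.toGroup fP6_rels

lemma phiP6_x : phiP6 P6x = Xu := PresentedGroup.toGroup.of fP6_rels

lemma phiP6_y : phiP6 P6y = Yu := PresentedGroup.toGroup.of fP6_rels

lemma phiP6_t1 : phiP6 P6t1 = tv (1, 0) := by
  show phiP6 (P6y * (P6x * P6x)⁻¹) = tv (1, 0)
  rw [map_mul, map_inv, map_mul, phiP6_x, phiP6_y]
  apply Units.ext
  decide

lemma phiP6_t2 : phiP6 P6t2 = tv (1, 1) := by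
  show phiP6 (P6y⁻¹ * (P6x * P6x)) = tv (1, 1)
  rw [map_mul, map_inv, map_mul, phiP6_x, phiP6_y]
  apply Units.ext
  decide

/-- The homomorphism `ℤ × ℤ → P₆`, `(m, n) ↦ t₁^m t₂^n`. -/
def psiP6 : Multiplicative (ℤ × ℤ) →* P6 where
  toFun p := P6t1 ^ (Multiplicative.toAdd p).1 * P6t2 ^ (Multiplicative.toAdd p).2
  map_one' := by simp
  map_mul' p q := by
    have key : ∀ p1 p2 q1 q2 : ℤ, P6t1 ^ (p1 + q1) * P6t2 ^ (p2 + q2)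
        = (P6t1 ^ p1 * P6t2 ^ p2) * (P6t1 ^ q1 * P6t2 ^ q2) := by
      intro p1 p2 q1 q2
      calc P6t1 ^ (p1 + q1) * P6t2 ^ (p2 + q2)
          = P6t1 ^ p1 * (P6t1 ^ q1 * P6t2 ^ p2) * P6t2 ^ q2 := by
            rw [zpow_add, zpow_add]; group
        _ = P6t1 ^ p1 * (P6t2 ^ p2 * P6t1 ^ q1) * P6t2 ^ q2 := by
            rw [(P6_comm.zpow_zpow q1 p2).eq]
        _ = (P6t1 ^ p1 * P6t2 ^ p2) * (P6t1 ^ q1 * P6t2 ^ q2) := by group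
    show P6t1 ^ (Multiplicative.toAdd (p * q)).1 * P6t2 ^ (Multiplicative.toAdd (p * q)).2
        = _ * _
    rw [toAdd_mul, Prod.fst_add, Prod.snd_add]
    exact key _ _ _ _

lemma psiP6_injective : Function.Injective psiP6 := by
  rw [injective_iff_map_eq_one]
  intro p hp
  have h1 : phiP6 (psiP6 p)
      = tv ((Multiplicative.toAdd p).1 + (Multiplicative.toAdd p).2,
            (Multiplicative.toAdd p).2) := by
    show phiP6 (P6t1 ^ (Multiplicative.toAdd p).1 * P6t2 ^ (Multiplicative.toAdd p).2) = _
    rw [map_mul, map_zpow, map_zpow, phiP6_t1, phiP6_t2, tv_zpow, tv_zpow, tv_mul]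
    congr 1
    simp [Prod.ext_iff, smul_eq_mul]
  rw [hp, map_one] at h1
  obtain ⟨e1, e2⟩ := tv_injective h1.symm
  have hu : (Multiplicative.toAdd p).1 = 0 := by omega
  have hp0 : Multiplicative.toAdd p = ((0 : ℤ), (0 : ℤ)) := Prod.ext hu e2
  exact congrArg Multiplicative.ofAdd hp0

/-- Conjugation stabilizes a closure as soon as it stabilizes the generators. -/
lemma conj_mem_closure {G : Type*} [Group G] {S : Set G} {g : G}
    (hS : ∀ s ∈ S, g * s * g⁻¹ ∈ Subgroup.closure S) :
    ∀ {h : G}, h ∈ Subgroup.closure S → g * h * g⁻¹ ∈ Subgroup.closure S := by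
  intro h hh
  have hmap : (Subgroup.closure S).map (MulAut.conj g).toMonoidHom ≤ Subgroup.closure S := by
    rw [MonoidHom.map_closure, Subgroup.closure_le]
    rintro _ ⟨s, hs, rfl⟩
    simpa using hS s hs
  have hx : (MulAut.conj g).toMonoidHom h
      ∈ (Subgroup.closure S).map (MulAut.conj g).toMonoidHom :=
    Subgroup.mem_map_of_mem _ hh
  simpa using hmap hx

/-- In `P₆`, the translations `t₁ = y x⁻²` and `t₂ = y⁻¹ x²` commute, generate a
normal subgroup, and this subgroup is free abelian of rank 2. -/
theorem stmt11 :
    Commute P6t1 P6t2 ∧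
    (Subgroup.closure ({P6t1, P6t2} : Set P6)).Normal ∧
    Nonempty ((Subgroup.closure ({P6t1, P6t2} : Set P6)) ≃* Multiplicative (ℤ × ℤ)) := by
  have ht1 : P6t1 ∈ Subgroup.closure ({P6t1, P6t2} : Set P6) :=
    Subgroup.subset_closure (Set.mem_insert _ _)
  have ht2 : P6t2 ∈ Subgroup.closure ({P6t1, P6t2} : Set P6) :=
    Subgroup.subset_closure (Set.mem_insert_of_mem _ rfl)
  -- conjugation by the generators of `P₆` preserves the closure
  have Cx : ∀ h ∈ Subgroup.closure ({P6t1, P6t2} : Set P6),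
      P6x * h * P6x⁻¹ ∈ Subgroup.closure ({P6t1, P6t2} : Set P6) := by
    intro h hh
    refine conj_mem_closure ?_ hh
    intro s hs
    simp only [Set.mem_insert_iff, Set.mem_singleton_iff] at hs
    rcases hs with rfl | rfl
    · rw [P6_conj1]; exact ht2
    · rw [P6_conj2]; exact mul_mem ht2 (inv_mem ht1)
  have Cxi : ∀ h ∈ Subgroup.closure ({P6t1, P6t2} : Set P6),
      P6x⁻¹ * h * P6x ∈ Subgroup.closure ({P6t1, P6t2} : Set P6) := by
    intro h hh
    have key : P6x⁻¹ * h * (P6x⁻¹)⁻¹ ∈ Subgroup.closure ({P6t1, P6t2} : Set P6) := by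
      refine conj_mem_closure ?_ hh
      intro s hs
      simp only [Set.mem_insert_iff, Set.mem_singleton_iff] at hs
      rcases hs with rfl | rfl
      · rw [inv_inv, P6_conj2']; exact mul_mem (inv_mem ht2) ht1
      · rw [inv_inv, P6_conj1']; exact ht1
    rwa [inv_inv] at key
  have Cy : ∀ h ∈ Subgroup.closure ({P6t1, P6t2} : Set P6),
      P6y * h * P6y⁻¹ ∈ Subgroup.closure ({P6t1, P6t2} : Set P6) := by
    intro h hh
    have e : P6y * h * P6y⁻¹
        = P6t1 * (P6x * (P6x * h * P6x⁻¹) * P6x⁻¹) * P6t1⁻¹ := by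
      rw [P6y_eq]; group
    rw [e]
    exact mul_mem (mul_mem ht1 (Cx _ (Cx _ hh))) (inv_mem ht1)
  have Cyi : ∀ h ∈ Subgroup.closure ({P6t1, P6t2} : Set P6),
      P6y⁻¹ * h * P6y ∈ Subgroup.closure ({P6t1, P6t2} : Set P6) := by
    intro h hh
    have e : P6y⁻¹ * h * P6y
        = P6x⁻¹ * (P6x⁻¹ * (P6t1⁻¹ * h * P6t1) * P6x) * P6x := by
      rw [P6y_eq]; group
    rw [e]
    exact Cxi _ (Cxi _ (mul_mem (mul_mem (inv_mem ht1) hh) ht1))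
  have hnormal : (Subgroup.closure ({P6t1, P6t2} : Set P6)).Normal := by
    rw [← Subgroup.normalizer_eq_top_iff, eq_top_iff]
    intro g _
    refine PresentedGroup.generated_by relsP6 _ (fun j => ?_) g
    fin_cases j
    · show P6x ∈ _
      refine Subgroup.mem_normalizer_iff.mpr fun h => ⟨fun hh => Cx h hh, fun hh => ?_⟩
      have h2 := Cxi _ hh
      rwa [show P6x⁻¹ * (P6x * h * P6x⁻¹) * P6x = h by group] at h2
    · show P6y ∈ _
      refine Subgroup.mem_normalizer_iff.mpr fun h => ⟨fun hh => Cy h hh, fun hh => ?_⟩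
      have h2 := Cyi _ hh
      rwa [show P6y⁻¹ * (P6y * h * P6y⁻¹) * P6y = h by group] at h2
  have hrange : psiP6.range = Subgroup.closure ({P6t1, P6t2} : Set P6) := by
    apply le_antisymm
    · rintro g ⟨p, rfl⟩
      have e : psiP6 p
          = P6t1 ^ (Multiplicative.toAdd p).1 * P6t2 ^ (Multiplicative.toAdd p).2 := rfl
      rw [e]
      exact mul_mem (Subgroup.zpow_mem _ ht1 _) (Subgroup.zpow_mem _ ht2 _)
    · rw [Subgroup.closure_le]
      intro s hs
      simp only [Set.mem_insert_iff, Set.mem_singleton_iff] at hs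
      rcases hs with rfl | rfl
      · exact ⟨Multiplicative.ofAdd (1, 0),
          by show P6t1 ^ (1 : ℤ) * P6t2 ^ (0 : ℤ) = P6t1; simp⟩
      · exact ⟨Multiplicative.ofAdd (0, 1),
          by show P6t1 ^ (0 : ℤ) * P6t2 ^ (1 : ℤ) = P6t2; simp⟩
  refine ⟨P6_comm, hnormal, ⟨?_⟩⟩
  exact (MulEquiv.subgroupCongr hrange.symm).trans
    (MonoidHom.ofInjective psiP6_injective).symm
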